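/- arXiv:1806.02647 — 2 statements merged into one kernel-verified Lean document; each statement's English description precedes it below -/
import Mathlib

section
/- Let 0 < ε_1 < … < ε_m be tolerances, let w_1, …, w_m ≥ 0 be real weights, and let c_w be the weighted cost values. For every k with 2 ≤ k ≤ m and every shortcut (i,j) (with i < j) that is valid for ε_{k−1}, it holds that c_w(k,(i,j)) = c_w(k−1,(i,j)) + w_k. -/
open Metric

noncomputable section

/-- The Euclidean plane. -/
abbrev Pt : Type := EuclideanSpace ℝ (Fin 2)

/-- The subcurve `⟨p i, …, p j⟩`: the union of the segments between consecutive vertices. -/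
def subcurve {n : ℕ} (p : Fin n → Pt) (i j : Fin n) : Set Pt :=
  ⋃ (t : Fin n) (_ : i ≤ t ∧ t < j) (h : (t : ℕ) + 1 < n),
    segment ℝ (p t) (p ⟨(t : ℕ) + 1, h⟩)

/-- The (Hausdorff-distance) error of the shortcut `(i, j)`. -/
def err {n : ℕ} (p : Fin n → Pt) (i j : Fin n) : ℝ :=
  Metric.hausdorffDist (segment ℝ (p i) (p j)) (subcurve p i j)

/-- The edges (consecutive pairs) of a path given as a list of vertices. -/
def edges {n : ℕ} (l : List (Fin n)) : List (Fin n × Fin n) := l.zip l.tail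

/-- `l` is a path from `i` to `j` at tolerance `ε`: a strictly increasing sequence of
indices starting at `i`, ending at `j`, all of whose edges are valid shortcuts for `ε`. -/
def IsPath {n : ℕ} (p : Fin n → Pt) (ε : ℝ) (i j : Fin n) (l : List (Fin n)) : Prop :=
  l.Chain' (· < ·) ∧ l.head? = some i ∧ l.getLast? = some j ∧
    ∀ e ∈ edges l, err p e.1 e.2 ≤ ε

/-- The cost of a path: the sum of the costs of its edges. -/
def pathCost {n : ℕ} {α : Type*} [AddCommMonoid α] (c : Fin n → Fin n → α)
    (l : List (Fin n)) : α :=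
  ((edges l).map (fun e => c e.1 e.2)).sum

/-- Minimum cost (natural-valued) of a path from `i` to `j` at tolerance `ε`. -/
def minCost {n : ℕ} (p : Fin n → Pt) (ε : ℝ) (c : Fin n → Fin n → ℕ) (i j : Fin n) : ℕ :=
  sInf {s : ℕ | ∃ l, IsPath p ε i j l ∧ pathCost c l = s}

/-- Minimum cost (real-valued) of a path from `i` to `j` at tolerance `ε`. -/
def minCostR {n : ℕ} (p : Fin n → Pt) (ε : ℝ) (c : Fin n → Fin n → ℝ) (i j : Fin n) : ℝ :=
  sInf {s : ℝ | ∃ l, IsPath p ε i j l ∧ pathCost c l = s}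

section Aux

variable {n : ℕ} (p : Fin n → Pt)

lemma subcurve_succ (t : Fin n) (h : (t : ℕ) + 1 < n) :
    subcurve p t ⟨(t : ℕ) + 1, h⟩ = segment ℝ (p t) (p ⟨(t : ℕ) + 1, h⟩) := by
  apply Set.Subset.antisymm
  · intro x hx
    simp only [subcurve, Set.mem_iUnion] at hx
    obtain ⟨s, ⟨hts, hst⟩, h', hx⟩ := hx
    have h1 : (t : ℕ) ≤ (s : ℕ) := hts
    have h2 : (s : ℕ) < (t : ℕ) + 1 := hst
    have hs : s = t := Fin.ext (by omega)
    subst hs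
    exact hx
  · intro x hx
    simp only [subcurve, Set.mem_iUnion]
    exact ⟨t, ⟨le_refl _, by simp [Fin.lt_def]⟩, h, hx⟩

lemma err_succ (t : Fin n) (h : (t : ℕ) + 1 < n) :
    err p t ⟨(t : ℕ) + 1, h⟩ = 0 := by
  rw [err, subcurve_succ]
  exact Metric.hausdorffDist_self_zero

lemma edges_cons₂ (a x : Fin n) (t : List (Fin n)) :
    edges (a :: x :: t) = (a, x) :: edges (x :: t) := rfl

lemma pathCost_single (c : Fin n → Fin n → ℝ) (a : Fin n) : pathCost c [a] = 0 := rfl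

lemma pathCost_cons₂ (c : Fin n → Fin n → ℝ) (a x : Fin n) (t : List (Fin n)) :
    pathCost c (a :: x :: t) = c a x + pathCost c (x :: t) := rfl

lemma mem_edges_lt : ∀ {l : List (Fin n)}, l.Chain' (· < ·) →
    ∀ e ∈ edges l, e.1 < e.2 := by
  intro l
  induction l with
  | nil => intro _ e he; simp [edges] at he
  | cons a t ih =>
    cases t with
    | nil => intro _ e he; simp [edges] at he
    | cons x t' =>
      intro hc e he
      rw [edges_cons₂, List.mem_cons] at he
      rcases he with he | he
      · subst he; exact (List.isChain_cons_cons.mp hc).1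
      · exact ih (List.isChain_cons_cons.mp hc).2 e he

lemma isPath_single {ε : ℝ} (a : Fin n) : IsPath p ε a a [a] :=
  ⟨List.isChain_singleton _, rfl, rfl, by intro e he; simp [edges] at he⟩

lemma isPath_cons {ε : ℝ} {a x j : Fin n} {l : List (Fin n)} (hax : a < x)
    (herr : err p a x ≤ ε) (hl : IsPath p ε x j l) : IsPath p ε a j (a :: l) := by
  obtain ⟨hc, hh, hg, he⟩ := hl
  cases l with
  | nil => simp at hh
  | cons y t =>
    have hxy : y = x := by simpa using hh
    subst hxy
    refine ⟨List.isChain_cons_cons.mpr ⟨hax, hc⟩, rfl, by simpa [List.getLast?_cons_cons] using hg, ?_⟩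
    intro e hme
    rw [edges_cons₂, List.mem_cons] at hme
    rcases hme with h | h
    · subst h; exact herr
    · exact he e h

lemma isPath_tail {ε : ℝ} {a x j : Fin n} {t : List (Fin n)}
    (h : IsPath p ε a j (a :: x :: t)) : IsPath p ε x j (x :: t) := by
  obtain ⟨hc, _, hg, he⟩ := h
  refine ⟨(List.isChain_cons_cons.mp hc).2, rfl, by simpa [List.getLast?_cons_cons] using hg, ?_⟩
  intro e hme
  exact he e (by rw [edges_cons₂]; exact List.mem_cons_of_mem _ hme)

lemma isPath_pair {ε : ℝ} {a b : Fin n} (hab : a < b) (herr : err p a b ≤ ε) :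
    IsPath p ε a b [a, b] :=
  isPath_cons p hab herr (isPath_single p b)

lemma exists_fullpath {ε : ℝ} (hε : 0 ≤ ε) :
    ∀ d (i j : Fin n), i ≤ j → (j : ℕ) ≤ (i : ℕ) + d → ∃ l, IsPath p ε i j l := by
  intro d
  induction d with
  | zero =>
    intro i j hij hd
    have h1 : (i : ℕ) ≤ (j : ℕ) := hij
    have : i = j := Fin.ext (by omega)
    subst this
    exact ⟨[i], isPath_single p i⟩
  | succ d ih =>
    intro i j hij hd
    by_cases h : i = j
    · subst h; exact ⟨[i], isPath_single p i⟩
    · have h1 : (i : ℕ) ≤ (j : ℕ) := hij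
      have hlt : (i : ℕ) < (j : ℕ) := lt_of_le_of_ne h1 (fun hh => h (Fin.ext hh))
      have hn : (i : ℕ) + 1 < n := lt_of_le_of_lt hlt j.isLt
      have hij' : (⟨(i : ℕ) + 1, hn⟩ : Fin n) ≤ j := by
        rw [Fin.le_def]; exact hlt
      obtain ⟨l, hl⟩ := ih ⟨(i : ℕ) + 1, hn⟩ j hij'
        (by show (j : ℕ) ≤ (i : ℕ) + 1 + d; omega)
      refine ⟨i :: l, isPath_cons p ?_ ?_ hl⟩
      · exact Fin.lt_def.mpr (Nat.lt_succ_self _)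
      · rw [err_succ]; exact hε

lemma isPath_append {ε : ℝ} (c : Fin n → Fin n → ℝ) :
    ∀ (l1 : List (Fin n)) {a b j : Fin n} {l2 : List (Fin n)},
    IsPath p ε a b l1 → IsPath p ε b j l2 →
    ∃ L, IsPath p ε a j L ∧ pathCost c L = pathCost c l1 + pathCost c l2 := by
  intro l1
  induction l1 with
  | nil => intro a b j l2 h1 _; exact absurd h1.2.1 (by simp)
  | cons x t ih =>
    intro a b j l2 h1 h2
    have hxa : x = a := by simpa using h1.2.1
    subst hxa
    cases t with
    | nil =>
      have hab : x = b := by simpa using h1.2.2.1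
      subst hab
      exact ⟨l2, h2, by rw [pathCost_single]; ring⟩
    | cons y t' =>
      have h1' : IsPath p ε y b (y :: t') := isPath_tail p h1
      obtain ⟨L, hL, hLc⟩ := ih h1' h2
      have hxy : x < y := (List.isChain_cons_cons.mp h1.1).1
      have herr : err p x y ≤ ε :=
        h1.2.2.2 (x, y) (by rw [edges_cons₂]; exact List.mem_cons_self)
      refine ⟨x :: L, isPath_cons p hxy herr hL, ?_⟩
      cases L with
      | nil => exact absurd hL.2.1 (by simp)
      | cons z t2 =>
        have hz : z = y := by simpa using hL.2.1
        subst hz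
        rw [pathCost_cons₂, pathCost_cons₂, hLc]
        ring

lemma pathCost_nonneg {ε : ℝ} {c : Fin n → Fin n → ℝ}
    (hc : ∀ a b : Fin n, a < b → err p a b ≤ ε → 0 ≤ c a b)
    {i j : Fin n} {l : List (Fin n)} (h : IsPath p ε i j l) : 0 ≤ pathCost c l := by
  apply List.sum_nonneg
  intro s hs
  rw [List.mem_map] at hs
  obtain ⟨e, he, rfl⟩ := hs
  exact hc e.1 e.2 (mem_edges_lt h.1 e he) (h.2.2.2 e he)

lemma isPath_cons₂_of_ne {ε : ℝ} {i j : Fin n} {l : List (Fin n)}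
    (h : IsPath p ε i j l) (hij : i ≠ j) : ∃ x t, l = i :: x :: t := by
  cases l with
  | nil => exact absurd h.2.1 (by simp)
  | cons y t =>
    have hy : y = i := by simpa using h.2.1
    subst hy
    cases t with
    | nil => exact absurd (by simpa using h.2.2.1) hij
    | cons x t' => exact ⟨x, t', rfl⟩

lemma real_le_of_forall_pos_le_add {a b : ℝ} (h : ∀ δ : ℝ, 0 < δ → a ≤ b + δ) : a ≤ b := by
  by_contra hc
  push_neg at hc
  have := h ((a - b) / 2) (by linarith)
  linarith

end Aux

lemma key_QR {n m : ℕ} (p : Fin n → Pt) (ε : ℕ → ℝ)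
    (hεpos : ∀ k, 1 ≤ k → k ≤ m → 0 < ε k)
    (w : ℕ → ℝ) (hw : ∀ k, 1 ≤ k → k ≤ m → 0 ≤ w k)
    (cw : ℕ → Fin n → Fin n → ℝ)
    (hc1 : ∀ i j : Fin n, i < j → err p i j ≤ ε 1 → cw 1 i j = w 1)
    (hck : ∀ k, 2 ≤ k → k ≤ m → ∀ i j : Fin n, i < j → err p i j ≤ ε k →
      cw k i j = w k + minCostR p (ε (k - 1)) (cw (k - 1)) i j) :
    ∀ k, 1 ≤ k → k ≤ m → ∀ a b : Fin n, a < b → err p a b ≤ ε k →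
      0 ≤ cw k a b ∧ ∀ l, IsPath p (ε k) a b l → cw k a b ≤ pathCost (cw k) l := by
  intro k hk1
  induction k, hk1 using Nat.le_induction with
  | base =>
    intro hm1 a b hab herr
    have hnn : ∀ a b : Fin n, a < b → err p a b ≤ ε 1 → 0 ≤ cw 1 a b := by
      intro a b h1 h2; rw [hc1 a b h1 h2]; exact hw 1 le_rfl hm1
    refine ⟨hnn a b hab herr, ?_⟩
    intro l hl
    obtain ⟨x, t, rfl⟩ := isPath_cons₂_of_ne p hl (ne_of_lt hab)
    rw [pathCost_cons₂, hc1 a b hab herr]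
    have hax : a < x := (List.isChain_cons_cons.mp hl.1).1
    have herrax : err p a x ≤ ε 1 :=
      hl.2.2.2 (a, x) (by rw [edges_cons₂]; exact List.mem_cons_self)
    have h1 : cw 1 a x = w 1 := hc1 a x hax herrax
    have h2 : 0 ≤ pathCost (cw 1) (x :: t) := pathCost_nonneg p hnn (isPath_tail p hl)
    linarith
  | succ k hk ih =>
    intro hk1m a b hab herr
    have hkm : k ≤ m := Nat.le_of_succ_le hk1m
    have IH := ih hkm
    have hεk : 0 < ε k := hεpos k hk hkm
    have hknn : ∀ a b : Fin n, a < b → err p a b ≤ ε k → 0 ≤ cw k a b :=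
      fun a b h1 h2 => (IH a b h1 h2).1
    have hSne : ∀ (a b : Fin n), a ≤ b →
        Set.Nonempty {s : ℝ | ∃ l, IsPath p (ε k) a b l ∧ pathCost (cw k) l = s} := by
      intro a b hab'
      obtain ⟨l, hl⟩ := exists_fullpath p (le_of_lt hεk) n a b hab'
        (le_trans (le_of_lt b.isLt) (Nat.le_add_left n _))
      exact ⟨pathCost (cw k) l, l, hl, rfl⟩
    have hSlb : ∀ (a b : Fin n),
        ∀ s ∈ {s : ℝ | ∃ l, IsPath p (ε k) a b l ∧ pathCost (cw k) l = s}, 0 ≤ s := by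
      rintro a b s ⟨l, hl, rfl⟩
      exact pathCost_nonneg p hknn hl
    have hMnn : ∀ a b : Fin n, 0 ≤ minCostR p (ε k) (cw k) a b :=
      fun a b => Real.sInf_nonneg (hSlb a b)
    have hMle : ∀ (a b : Fin n) (l : List (Fin n)), IsPath p (ε k) a b l →
        minCostR p (ε k) (cw k) a b ≤ pathCost (cw k) l := by
      intro a b l hl
      exact csInf_le ⟨0, fun s hs => hSlb a b s hs⟩ ⟨l, hl, rfl⟩
    have hwk1 : 0 ≤ w (k + 1) := hw (k + 1) (by omega) hk1m
    have h2k : 2 ≤ k + 1 := by omega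
    have cheap : ∀ (l : List (Fin n)) (a : Fin n), IsPath p (ε (k + 1)) a b l →
        ∀ δ : ℝ, 0 < δ → ∃ L, IsPath p (ε k) a b L ∧ pathCost (cw k) L ≤
          ((edges l).map (fun e => minCostR p (ε k) (cw k) e.1 e.2)).sum + δ := by
      intro l
      induction l with
      | nil => intro a h δ hδ; exact absurd h.2.1 (by simp)
      | cons x t ihl =>
        intro a hpath δ hδ
        have hxa : x = a := by simpa using hpath.2.1
        subst hxa
        cases t with
        | nil =>
          have hxb : x = b := by simpa using hpath.2.2.1
          subst hxb
          refine ⟨[x], isPath_single p x, ?_⟩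
          rw [pathCost_single]
          simp [edges]
          linarith
        | cons y t' =>
          have hxy : x < y := (List.isChain_cons_cons.mp hpath.1).1
          obtain ⟨s1, hs1mem, hs1lt⟩ :=
            Real.lt_sInf_add_pos (hSne x y (le_of_lt hxy)) (half_pos hδ)
          obtain ⟨L1, hL1, hL1c⟩ := hs1mem
          obtain ⟨L2, hL2, hL2c⟩ := ihl y (isPath_tail p hpath) (δ / 2) (half_pos hδ)
          obtain ⟨L, hL, hLc⟩ := isPath_append p (cw k) L1 hL1 hL2
          refine ⟨L, hL, ?_⟩
          rw [hLc, edges_cons₂, List.map_cons, List.sum_cons]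
          have hmc : minCostR p (ε k) (cw k) x y =
              sInf {s : ℝ | ∃ l, IsPath p (ε k) x y l ∧ pathCost (cw k) l = s} := rfl
          rw [hmc]
          linarith
    rw [hck (k + 1) h2k hk1m a b hab herr]
    simp only [Nat.add_sub_cancel]
    constructor
    · linarith [hMnn a b]
    · intro l hl
      obtain ⟨x, t, rfl⟩ := isPath_cons₂_of_ne p hl (ne_of_lt hab)
      rw [pathCost_cons₂]
      have hax : a < x := (List.isChain_cons_cons.mp hl.1).1
      have herrax : err p a x ≤ ε (k + 1) :=
        hl.2.2.2 (a, x) (by rw [edges_cons₂]; exact List.mem_cons_self)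
      have hcax : cw (k + 1) a x = w (k + 1) + minCostR p (ε k) (cw k) a x := by
        have h := hck (k + 1) h2k hk1m a x hax herrax
        simpa using h
      have hrest : ((edges (x :: t)).map
          (fun e => minCostR p (ε k) (cw k) e.1 e.2)).sum ≤ pathCost (cw (k + 1)) (x :: t) := by
        have hpd : pathCost (cw (k + 1)) (x :: t) =
            ((edges (x :: t)).map (fun e => cw (k + 1) e.1 e.2)).sum := rfl
        rw [hpd]
        apply List.sum_le_sum
        intro e he
        have h1 : e.1 < e.2 := mem_edges_lt (isPath_tail p hl).1 e he
        have h2 : err p e.1 e.2 ≤ ε (k + 1) := (isPath_tail p hl).2.2.2 e he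
        have h3 := hck (k + 1) h2k hk1m e.1 e.2 h1 h2
        simp only [Nat.add_sub_cancel] at h3
        rw [h3]
        linarith [hMnn e.1 e.2]
      have hMab : minCostR p (ε k) (cw k) a b ≤
          ((edges (a :: x :: t)).map (fun e => minCostR p (ε k) (cw k) e.1 e.2)).sum := by
        apply real_le_of_forall_pos_le_add
        intro δ hδ
        obtain ⟨L, hLp, hLc⟩ := cheap (a :: x :: t) a hl δ hδ
        exact le_trans (hMle a b L hLp) hLc
      rw [edges_cons₂, List.map_cons, List.sum_cons] at hMab
      linarith

/-- For `2 ≤ k ≤ m` and any shortcut `(i, j)` valid for `ε (k-1)`,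
the weighted DP cost values satisfy `c_w k (i,j) = c_w (k-1) (i,j) + w k`. -/
theorem weighted_cost_increment {n m : ℕ} (hn : 2 ≤ n) (hm : 1 ≤ m) (p : Fin n → Pt)
    (ε : ℕ → ℝ) (hε1 : 0 < ε 1)
    (hεmono : ∀ k, 1 ≤ k → k < m → ε k < ε (k + 1))
    (w : ℕ → ℝ) (hw : ∀ k, 1 ≤ k → k ≤ m → 0 ≤ w k)
    (cw : ℕ → Fin n → Fin n → ℝ)
    (hc1 : ∀ i j : Fin n, i < j → err p i j ≤ ε 1 → cw 1 i j = w 1)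
    (hck : ∀ k, 2 ≤ k → k ≤ m → ∀ i j : Fin n, i < j → err p i j ≤ ε k →
      cw k i j = w k + minCostR p (ε (k - 1)) (cw (k - 1)) i j) :
    ∀ k, 2 ≤ k → k ≤ m → ∀ i j : Fin n, i < j → err p i j ≤ ε (k - 1) →
      cw k i j = cw (k - 1) i j + w k := by
  intro k hk2 hkm i j hij herr
  have hεpos : ∀ k, 1 ≤ k → k ≤ m → 0 < ε k := by
    intro k hk1
    induction k, hk1 using Nat.le_induction with
    | base => intro _; exact hε1
    | succ k hk ih => intro hkm; exact lt_trans (ih (by omega)) (hεmono k hk (by omega))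
  have hQR := key_QR p ε hεpos w hw cw hc1 hck
  have hk1 : 1 ≤ k - 1 := by omega
  have hk1m : k - 1 ≤ m := by omega
  have hmono : ε (k - 1) < ε k := by
    have h := hεmono (k - 1) hk1 (by omega)
    rwa [Nat.sub_add_cancel (by omega : 1 ≤ k)] at h
  have herrk : err p i j ≤ ε k := le_trans herr (le_of_lt hmono)
  rw [hck k hk2 hkm i j hij herrk]
  have hQ := hQR (k - 1) hk1 hk1m i j hij herr
  have hmem : cw (k - 1) i j ∈
      {s : ℝ | ∃ l, IsPath p (ε (k - 1)) i j l ∧ pathCost (cw (k - 1)) l = s} :=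
    ⟨[i, j], isPath_pair p hij herr, by rw [pathCost_cons₂, pathCost_single]; ring⟩
  have hbdd : ∀ s ∈ {s : ℝ | ∃ l, IsPath p (ε (k - 1)) i j l ∧ pathCost (cw (k - 1)) l = s},
      cw (k - 1) i j ≤ s := by
    rintro s ⟨l, hl, rfl⟩
    exact hQ.2 l hl
  have hM : minCostR p (ε (k - 1)) (cw (k - 1)) i j = cw (k - 1) i j :=
    le_antisymm (csInf_le ⟨cw (k - 1) i j, fun s hs => hbdd s hs⟩ hmem)
      (le_csInf ⟨_, hmem⟩ hbdd)
  rw [hM]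
  ring
end
end

section
/- For all 0 ≤ i < j ≤ n−1, the Hausdorff-distance error of the shortcut (i,j) equals the largest distance from a vertex of the subcurve to the segment: ε(i,j) = max_{i ≤ t ≤ j} Metric.infDist (p t) (segment ℝ (p i) (p j)). -/
open Metric

noncomputable section

lemma isCompact_seg (a b : Pt) : IsCompact (segment ℝ a b) := by
  rw [segment_eq_image]
  exact isCompact_Icc.image (by fun_prop)

lemma infDist_seg_le_max {S : Set Pt} (hS : Convex ℝ S) (hc : IsCompact S) (hne : S.Nonempty)
    {u v x : Pt} (hx : x ∈ segment ℝ u v) :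
    infDist x S ≤ max (infDist u S) (infDist v S) := by
  obtain ⟨a, b, ha, hb, hab, rfl⟩ := hx
  obtain ⟨u', hu', hu⟩ := hc.exists_infDist_eq_dist hne u
  obtain ⟨v', hv', hv⟩ := hc.exists_infDist_eq_dist hne v
  have hm : a • u' + b • v' ∈ S := hS hu' hv' ha hb hab
  calc infDist (a•u+b•v) S ≤ dist (a•u+b•v) (a•u'+b•v') := infDist_le_dist_of_mem hm
    _ ≤ dist (a•u) (a•u') + dist (b•v) (b•v') := dist_add_add_le _ _ _ _
    _ = a * dist u u' + b * dist v v' := by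
        rw [dist_smul₀, dist_smul₀, Real.norm_of_nonneg ha, Real.norm_of_nonneg hb]
    _ ≤ a * max (infDist u S) (infDist v S) + b * max (infDist u S) (infDist v S) := by
        gcongr
        · rw [← hu]; exact le_max_left _ _
        · rw [← hv]; exact le_max_right _ _
    _ = max (infDist u S) (infDist v S) := by rw [← add_mul, hab, one_mul]

lemma dist_le_of_orthogonal {x y z d : Pt} (c : ℝ)
    (horth : (inner ℝ (y - x) d : ℝ) = 0) (hzx : z - x = c • d) : dist x y ≤ dist y z := by
  have hyz : y - z = (y - x) + (x - z) := by abel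
  have hxz : x - z = (-c) • d := by rw [neg_smul, ← hzx]; abel
  have hinner : (inner ℝ (y - x) (x - z) : ℝ) = 0 := by
    rw [hxz, inner_smul_right, horth]; ring
  have hpyth : ‖y - z‖ ^ 2 = ‖y - x‖ ^ 2 + ‖x - z‖ ^ 2 := by
    rw [hyz, norm_add_sq_real, hinner]; ring
  rw [dist_eq_norm, dist_eq_norm, norm_sub_rev x y]
  nlinarith [norm_nonneg (y - x), norm_nonneg (y - z), sq_nonneg ‖x - z‖]

lemma seg_sub {a b x : Pt} (hx : x ∈ segment ℝ a b) :
    ∃ c : ℝ, 0 ≤ c ∧ c ≤ 1 ∧ x - a = c • (b - a) := by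
  obtain ⟨s, t, hs, ht, hst, hxeq⟩ := hx
  refine ⟨t, ht, by linarith, ?_⟩
  rw [← hxeq]
  have hs1 : s = 1 - t := by linarith
  subst hs1
  module

lemma inner_combo (u w q d : Pt) (μ : ℝ) :
    (inner ℝ (((1 - μ) • u + μ • w) - q) d : ℝ)
      = (1 - μ) * (inner ℝ (u - q) d : ℝ) + μ * (inner ℝ (w - q) d : ℝ) := by
  have h : ((1 - μ) • u + μ • w) - q = (1 - μ) • (u - q) + μ • (w - q) := by module
  rw [h, inner_add_left, real_inner_smul_left, real_inner_smul_left]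

/-- Membership in the subcurve, unfolded. -/
lemma mem_subcurve_iff {n : ℕ} (p : Fin n → Pt) (i j : Fin n) (x : Pt) :
    x ∈ subcurve p i j ↔ ∃ (t : Fin n) (h : (t : ℕ) + 1 < n),
      i ≤ t ∧ t < j ∧ x ∈ segment ℝ (p t) (p ⟨(t : ℕ) + 1, h⟩) := by
  simp only [subcurve, Set.mem_iUnion]
  constructor
  · rintro ⟨t, ⟨h1, h2⟩, h, hx⟩; exact ⟨t, h, h1, h2, hx⟩
  · rintro ⟨t, h, h1, h2, hx⟩; exact ⟨t, ⟨h1, h2⟩, h, hx⟩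

/-- Each vertex `p t`, `i ≤ t ≤ j`, lies on the subcurve. -/
lemma vertex_mem_subcurve {n : ℕ} (p : Fin n → Pt) {i j : Fin n} (hij : i < j)
    {t : Fin n} (ht : t ∈ Finset.Icc i j) : p t ∈ subcurve p i j := by
  rw [Finset.mem_Icc] at ht
  obtain ⟨hit, htj⟩ := ht
  rcases lt_or_eq_of_le htj with htj' | heq
  · have h : (t : ℕ) + 1 < n := lt_of_le_of_lt (Nat.succ_le_of_lt htj') j.isLt
    exact (mem_subcurve_iff p i j _).2 ⟨t, h, hit, htj', left_mem_segment ℝ _ _⟩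
  · -- t = j : use the previous edge
    subst heq
    have hj0 : 0 < (t : ℕ) := lt_of_le_of_lt (Nat.zero_le _) hij
    set t' : Fin n := ⟨(t : ℕ) - 1, lt_trans (Nat.sub_lt hj0 one_pos) t.isLt⟩ with ht'
    have hsucc : (t' : ℕ) + 1 = (t : ℕ) := Nat.succ_pred_eq_of_pos hj0
    have h : (t' : ℕ) + 1 < n := hsucc ▸ t.isLt
    have hit' : i ≤ t' := by
      rw [Fin.le_def]
      exact Nat.le_sub_one_of_lt hij
    have ht'j : t' < t := by
      rw [Fin.lt_def]
      exact Nat.sub_lt hj0 one_pos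
    have hpt : p t = p ⟨(t' : ℕ) + 1, h⟩ := congrArg p (Fin.ext_iff.mpr hsucc.symm)
    exact (mem_subcurve_iff p i t _).2 ⟨t', h, hit', ht'j, by
      rw [hpt]; exact right_mem_segment ℝ _ _⟩

/-- The Hausdorff-distance error of a shortcut `(i, j)` equals the
largest distance from a vertex `p t`, `i ≤ t ≤ j`, of the subcurve to the segment. -/
theorem err_eq_max_vertex_dist {n : ℕ} (hn : 2 ≤ n) (p : Fin n → Pt)
    (i j : Fin n) (hij : i < j) :
    err p i j = (Finset.Icc i j).sup' (Finset.nonempty_Icc.mpr hij.le)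
      (fun t => Metric.infDist (p t) (segment ℝ (p i) (p j))) := by
  classical
  set S := segment ℝ (p i) (p j) with hSdef
  set C := subcurve p i j with hCdef
  have hne : (Finset.Icc i j).Nonempty := Finset.nonempty_Icc.mpr hij.le
  set M := (Finset.Icc i j).sup' hne (fun t => infDist (p t) S) with hMdef
  have hSne : S.Nonempty := ⟨p i, left_mem_segment ℝ _ _⟩
  have hScomp : IsCompact S := isCompact_seg _ _
  have hSconv : Convex ℝ S := convex_segment _ _
  have hiIcc : i ∈ Finset.Icc i j := Finset.mem_Icc.mpr ⟨le_refl i, hij.le⟩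
  have hjIcc : j ∈ Finset.Icc i j := Finset.mem_Icc.mpr ⟨hij.le, le_refl j⟩
  have hCne : C.Nonempty := ⟨p i, vertex_mem_subcurve p hij hiIcc⟩
  -- curve-side bound
  have hC : ∀ x ∈ C, infDist x S ≤ M := by
    intro x hx
    obtain ⟨t, h, hit, htj, hseg⟩ := (mem_subcurve_iff p i j x).1 hx
    have ht : t ∈ Finset.Icc i j := Finset.mem_Icc.mpr ⟨hit, htj.le⟩
    have ht1 : (⟨(t : ℕ) + 1, h⟩ : Fin n) ∈ Finset.Icc i j := by
      rw [Finset.mem_Icc]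
      constructor
      · rw [Fin.le_def]; exact le_trans hit (Nat.le_succ _)
      · rw [Fin.le_def]; exact Nat.succ_le_of_lt htj
    calc infDist x S ≤ max (infDist (p t) S) (infDist (p ⟨(t : ℕ) + 1, h⟩) S) :=
          infDist_seg_le_max hSconv hScomp hSne hseg
      _ ≤ M := by
          rw [hMdef]
          exact max_le (Finset.le_sup' (fun t => infDist (p t) S) ht)
            (Finset.le_sup' (fun t => infDist (p t) S) ht1)
  have hMnonneg : 0 ≤ M := by
    rw [hMdef]
    exact le_trans infDist_nonneg (Finset.le_sup' (fun t => infDist (p t) S) hiIcc)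
  -- boundedness
  have hbound : Bornology.IsBounded C := by
    have hsub : C ⊆ convexHull ℝ (Set.range p) := by
      intro x hx
      obtain ⟨t, h, _, _, hseg⟩ := (mem_subcurve_iff p i j x).1 hx
      exact (convex_convexHull ℝ _).segment_subset
        (subset_convexHull ℝ _ (Set.mem_range_self t))
        (subset_convexHull ℝ _ (Set.mem_range_self _)) hseg
    exact ((isBounded_convexHull.mpr (Set.finite_range p).isBounded)).subset hsub
  have hedist : Metric.hausdorffEDist S C ≠ ⊤ :=
    hausdorffEDist_ne_top_of_nonempty_of_bounded hSne hCne hScomp.isBounded hbound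
  apply le_antisymm
  · -- err ≤ M
    rw [err]
    apply hausdorffDist_le_of_infDist hMnonneg ?_ hC
    intro x hxS
    rw [hSdef] at hxS
    have hdd : ∃ d : Pt, d = p j - p i := ⟨_, rfl⟩
    obtain ⟨d, hd⟩ := hdd
    obtain ⟨c, hc0, hc1, hxpi⟩ := seg_sub hxS
    rw [← hd] at hxpi
    obtain ⟨v, hveq⟩ : ∃ v : ℝ, v = c * ‖d‖ ^ 2 := ⟨_, rfl⟩
    have hvx : (inner ℝ (x - p i) d : ℝ) = v := by
      rw [hxpi, real_inner_smul_left, real_inner_self_eq_norm_sq, hveq]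
    have hsplit : ∀ y : Pt, (inner ℝ (y - x) d : ℝ) = (inner ℝ (y - p i) d : ℝ) - v := by
      intro y
      rw [← hvx, show y - x = (y - p i) - (x - p i) by abel, inner_sub_left]
    have hv0 : 0 ≤ v := by rw [hveq]; positivity
    have hFj : (inner ℝ (p j - p i) d : ℝ) = ‖d‖ ^ 2 := by
      rw [← hd, real_inner_self_eq_norm_sq]
    have hvL : v ≤ ‖d‖ ^ 2 := by nlinarith [sq_nonneg ‖d‖]
    -- key step: a point on the curve with the same projection gives the bound
    have key : ∀ y ∈ C, (inner ℝ (y - x) d : ℝ) = 0 → infDist x C ≤ M := by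
      intro y hy horth
      obtain ⟨z, hz, hzd⟩ := hScomp.exists_infDist_eq_dist hSne y
      have hz' : z ∈ segment ℝ (p i) (p j) := by rwa [hSdef] at hz
      obtain ⟨c', _, _, hzpi⟩ := seg_sub hz'
      rw [← hd] at hzpi
      have hzx : z - x = (c' - c) • d := by rw [sub_smul, ← hzpi, ← hxpi]; abel
      calc infDist x C ≤ dist x y := infDist_le_dist_of_mem hy
        _ ≤ dist y z := dist_le_of_orthogonal (c' - c) horth hzx
        _ = infDist y S := hzd.symm
        _ ≤ M := hC y hy
    -- discrete intermediate value theorem to find such a `y`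
    set T := (Finset.Icc i j).filter (fun t => (inner ℝ (p t - p i) d : ℝ) ≤ v) with hT
    have hiT : i ∈ T := by
      rw [hT, Finset.mem_filter]
      exact ⟨hiIcc, by simp [hv0]⟩
    have hTne : T.Nonempty := ⟨i, hiT⟩
    have ht₀T : T.max' hTne ∈ T := T.max'_mem hTne
    obtain ⟨t₀, ht₀⟩ : ∃ t₀ : Fin n, t₀ = T.max' hTne := ⟨_, rfl⟩
    rw [← ht₀, hT, Finset.mem_filter, Finset.mem_Icc] at ht₀T
    obtain ⟨⟨hit₀, ht₀j⟩, hFt₀⟩ := ht₀T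
    rcases lt_or_eq_of_le ht₀j with ht₀j' | heq
    · -- t₀ < j
      have h : (t₀ : ℕ) + 1 < n := lt_of_le_of_lt (Nat.succ_le_of_lt ht₀j') j.isLt
      obtain ⟨t₁, ht₁⟩ : ∃ t₁ : Fin n, t₁ = ⟨(t₀ : ℕ) + 1, h⟩ := ⟨_, rfl⟩
      have ht₀t₁ : t₀ < t₁ := by rw [ht₁, Fin.lt_def]; exact Nat.lt_succ_self _
      have ht₁Icc : t₁ ∈ Finset.Icc i j := by
        rw [Finset.mem_Icc]
        refine ⟨le_trans hit₀ ht₀t₁.le, ?_⟩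
        rw [ht₁, Fin.le_def]
        exact Nat.succ_le_of_lt ht₀j'
      have hFt₁ : v < (inner ℝ (p t₁ - p i) d : ℝ) := by
        by_contra hcon
        push_neg at hcon
        have hmem : t₁ ∈ T := by rw [hT, Finset.mem_filter]; exact ⟨ht₁Icc, hcon⟩
        have := T.le_max' t₁ hmem
        rw [← ht₀] at this
        exact absurd this (not_le.mpr ht₀t₁)
      obtain ⟨g, hg⟩ : ∃ g : ℝ, g = (inner ℝ (p t₀ - p i) d : ℝ) := ⟨_, rfl⟩
      obtain ⟨w, hw⟩ : ∃ w : ℝ, w = (inner ℝ (p t₁ - p i) d : ℝ) := ⟨_, rfl⟩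
      rw [← hg] at hFt₀
      rw [← hw] at hFt₁
      have hgw : g < w := lt_of_le_of_lt hFt₀ hFt₁
      obtain ⟨μ, hμ⟩ : ∃ μ : ℝ, μ = (v - g) / (w - g) := ⟨_, rfl⟩
      have hμ0 : 0 ≤ μ := by rw [hμ]; exact div_nonneg (by linarith) (by linarith)
      have hμ1 : μ ≤ 1 := by rw [hμ, div_le_one (by linarith)]; linarith
      obtain ⟨y, hy⟩ : ∃ y : Pt, y = (1 - μ) • p t₀ + μ • p t₁ := ⟨_, rfl⟩
      have hyseg : y ∈ segment ℝ (p t₀) (p t₁) :=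
        ⟨1 - μ, μ, by linarith, hμ0, by ring, hy.symm⟩
      have hyC : y ∈ C := by
        rw [hCdef]
        refine (mem_subcurve_iff p i j y).2 ⟨t₀, h, hit₀, ht₀j', ?_⟩
        rwa [← ht₁]
      have hμwg : μ * (w - g) = v - g := by
        rw [hμ]
        exact div_mul_cancel₀ _ (ne_of_gt (by linarith))
      have hFy : (inner ℝ (y - x) d : ℝ) = 0 := by
        rw [hsplit y, hy, inner_combo, ← hg, ← hw]
        linear_combination hμwg
      exact key y hyC hFy
    · -- t₀ = j
      have hFy : (inner ℝ (p t₀ - x) d : ℝ) = 0 := by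
        rw [hsplit (p t₀)]
        have h1 : (inner ℝ (p t₀ - p i) d : ℝ) = ‖d‖ ^ 2 := by rw [heq]; exact hFj
        have : v = ‖d‖ ^ 2 := le_antisymm hvL (by rw [← h1]; exact hFt₀)
        rw [h1, this, sub_self]
      refine key (p t₀) ?_ hFy
      rw [heq]
      exact vertex_mem_subcurve p hij hjIcc
  · -- M ≤ err
    rw [hMdef]
    apply Finset.sup'_le
    intro t ht
    have h := infDist_le_hausdorffDist_of_mem (vertex_mem_subcurve p hij ht)
      (by rwa [Metric.hausdorffEDist_comm] at hedist)
    rw [err, hausdorffDist_comm]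
    exact h
end
end
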